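/- Let G = (V, E) be a simple graph, let H be the simple graph on vertex set V ∪ {a} (a a new vertex) whose edge set is exactly {av : v ∈ V}, and let the terminal pair set be S = E. If the Multicut with Vertex Splitting instance (H, S, t) admits a solution with at most t exclusive vertex splits, then it admits a solution with at most t exclusive vertex splits in which every split is applied to a or to a descendant of a. -/

import Mathlib

structure SG where
  verts : Finset ℕ
  edges : Finset (Sym2 ℕ)
  edges_mem : ∀ e ∈ edges, ∀ x ∈ e, x ∈ verts
  edges_nd : ∀ e ∈ edges, ¬ e.IsDiag

/-- A state of the splitting process: the current graph, the set of vertex names used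
so far (to guarantee freshness of new vertices), and the map sending each current
vertex to its original ancestor. -/
structure MCState where
  g : SG
  used : Finset ℕ
  anc : ℕ → ℕ

/-- One exclusive vertex split applied to the vertex `v`. -/
def ExclStepAt (v : ℕ) (p q : MCState) : Prop :=
  ∃ v1 v2 : ℕ, v ∈ p.g.verts ∧ v1 ∉ p.used ∧ v2 ∉ p.used ∧ v1 ∉ p.g.verts ∧
    v2 ∉ p.g.verts ∧ v1 ≠ v2 ∧
    q.used = insert v1 (insert v2 p.used) ∧
    (q.anc = fun u => if u = v1 ∨ u = v2 then p.anc v else p.anc u) ∧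
    q.g.verts = insert v1 (insert v2 (p.g.verts.erase v)) ∧
    (∀ u w : ℕ, u ≠ v → w ≠ v → u ≠ v1 → u ≠ v2 → w ≠ v1 → w ≠ v2 →
      (s(u,w) ∈ p.g.edges ↔ s(u,w) ∈ q.g.edges)) ∧
    (∀ u : ℕ, s(u,v) ∈ p.g.edges ↔ (s(u,v1) ∈ q.g.edges ∨ s(u,v2) ∈ q.g.edges)) ∧
    (∀ u : ℕ, ¬ (s(u,v1) ∈ q.g.edges ∧ s(u,v2) ∈ q.g.edges))

def Reach (H : SG) (x y : ℕ) : Prop :=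
  Relation.ReflTransGen (fun a b => s(a,b) ∈ H.edges) x y

open Finset in
/-- union-of-stars graph: leaves `V`, centers `C`, each `v ∈ V` attached to `m v`. -/
def starSG (V C : Finset ℕ) (m : ℕ → ℕ) : SG where
  verts := V ∪ C
  edges := (V.filter fun v => m v ∈ C ∧ v ∉ C).image fun v => s(v, m v)
  edges_mem := by
    intro e he x hx
    simp only [Finset.mem_image, Finset.mem_filter] at he
    obtain ⟨v, ⟨hv, hmv, _⟩, rfl⟩ := he
    simp only [Sym2.mem_iff] at hx
    rcases hx with rfl | rfl
    · exact Finset.mem_union_left _ hv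
    · exact Finset.mem_union_right _ hmv
  edges_nd := by
    intro e he
    simp only [Finset.mem_image, Finset.mem_filter] at he
    obtain ⟨v, ⟨hv, hmv, hvC⟩, rfl⟩ := he
    simp only [Sym2.mk_isDiag_iff]
    intro hvm
    exact hvC (hvm ▸ hmv)

lemma starSG_verts (V C : Finset ℕ) (m : ℕ → ℕ) : (starSG V C m).verts = V ∪ C := rfl

lemma mem_starSG (V C : Finset ℕ) (m : ℕ → ℕ)
    (hm : ∀ v ∈ V, m v ∈ C) (hd : ∀ v ∈ V, v ∉ C) (x y : ℕ) :
    s(x,y) ∈ (starSG V C m).edges ↔ ∃ z ∈ V, (x = z ∧ y = m z) ∨ (x = m z ∧ y = z) := by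
  simp only [starSG, Finset.mem_image, Finset.mem_filter]
  constructor
  · rintro ⟨z, ⟨hz, _, _⟩, hzeq⟩
    rw [Sym2.eq_iff] at hzeq
    exact ⟨z, hz, by tauto⟩
  · rintro ⟨z, hz, h⟩
    refine ⟨z, ⟨hz, hm z hz, hd z hz⟩, ?_⟩
    rw [Sym2.eq_iff]; tauto

lemma not_reach_starSG (V C : Finset ℕ) (m : ℕ → ℕ)
    (hm : ∀ v ∈ V, m v ∈ C) (hd : ∀ v ∈ V, v ∉ C) (x y : ℕ)
    (hx : x ∈ V) (hy : y ∈ V) (hne : m x ≠ m y) : ¬ Reach (starSG V C m) x y := by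
  intro hr
  have key : ∀ z, Relation.ReflTransGen (fun a b => s(a,b) ∈ (starSG V C m).edges) x z →
      (z ∈ V ∧ m z = m x) ∨ z = m x := by
    intro z hz
    induction hz with
    | refl => exact Or.inl ⟨hx, rfl⟩
    | @tail b c _ hbc ih =>
      rw [mem_starSG V C m hm hd] at hbc
      obtain ⟨w, hw, hcase⟩ := hbc
      rcases ih with ⟨hbV, hbm⟩ | hbm
      · rcases hcase with ⟨hbw, hcw⟩ | ⟨hbmw, hcw⟩
        · subst hbw; subst hcw
          exact Or.inr (by rw [hbm])
        · exfalso
          apply hd b hbV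
          rw [hbmw]
          exact hm w hw
      · rcases hcase with ⟨hbw, hcw⟩ | ⟨hbmw, hcw⟩
        · exfalso
          apply hd w hw
          rw [← hbw, hbm]
          exact hm x hx
        · subst hcw
          exact Or.inl ⟨hw, by rw [← hbmw, hbm]⟩
  rcases key y hr with ⟨_, h⟩ | h
  · exact hne h.symm
  · exact hd y hy (h ▸ hm x hx)

/-- The body of `ExclStepAt` with the new vertices made explicit. -/
def ESB (v v1 v2 : ℕ) (p q : MCState) : Prop :=
  v ∈ p.g.verts ∧ v1 ∉ p.used ∧ v2 ∉ p.used ∧ v1 ∉ p.g.verts ∧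
    v2 ∉ p.g.verts ∧ v1 ≠ v2 ∧
    q.used = insert v1 (insert v2 p.used) ∧
    (q.anc = fun u => if u = v1 ∨ u = v2 then p.anc v else p.anc u) ∧
    q.g.verts = insert v1 (insert v2 (p.g.verts.erase v)) ∧
    (∀ u w : ℕ, u ≠ v → w ≠ v → u ≠ v1 → u ≠ v2 → w ≠ v1 → w ≠ v2 →
      (s(u,w) ∈ p.g.edges ↔ s(u,w) ∈ q.g.edges)) ∧
    (∀ u : ℕ, s(u,v) ∈ p.g.edges ↔ (s(u,v1) ∈ q.g.edges ∨ s(u,v2) ∈ q.g.edges)) ∧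
    (∀ u : ℕ, ¬ (s(u,v1) ∈ q.g.edges ∧ s(u,v2) ∈ q.g.edges))

lemma exclStepAt_iff (v : ℕ) (p q : MCState) :
    ExclStepAt v p q ↔ ∃ v1 v2, ESB v v1 v2 p q := Iff.rfl

namespace ESB

variable {v v1 v2 : ℕ} {p q : MCState}

lemma hvp (h : ESB v v1 v2 p q) : v ∈ p.g.verts := h.1
lemma h1u (h : ESB v v1 v2 p q) : v1 ∉ p.used := h.2.1
lemma h2u (h : ESB v v1 v2 p q) : v2 ∉ p.used := h.2.2.1
lemma h1v (h : ESB v v1 v2 p q) : v1 ∉ p.g.verts := h.2.2.2.1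
lemma h2v (h : ESB v v1 v2 p q) : v2 ∉ p.g.verts := h.2.2.2.2.1
lemma h12 (h : ESB v v1 v2 p q) : v1 ≠ v2 := h.2.2.2.2.2.1
lemma hused (h : ESB v v1 v2 p q) : q.used = insert v1 (insert v2 p.used) := h.2.2.2.2.2.2.1
lemma hancq (h : ESB v v1 v2 p q) :
    q.anc = fun u => if u = v1 ∨ u = v2 then p.anc v else p.anc u := h.2.2.2.2.2.2.2.1
lemma hverts (h : ESB v v1 v2 p q) :
    q.g.verts = insert v1 (insert v2 (p.g.verts.erase v)) := h.2.2.2.2.2.2.2.2.1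
lemma hpin (h : ESB v v1 v2 p q) :
    ∀ u w : ℕ, u ≠ v → w ≠ v → u ≠ v1 → u ≠ v2 → w ≠ v1 → w ≠ v2 →
    (s(u,w) ∈ p.g.edges ↔ s(u,w) ∈ q.g.edges) := h.2.2.2.2.2.2.2.2.2.1
lemma hsplit (h : ESB v v1 v2 p q) :
    ∀ u : ℕ, s(u,v) ∈ p.g.edges ↔ (s(u,v1) ∈ q.g.edges ∨ s(u,v2) ∈ q.g.edges) :=
  h.2.2.2.2.2.2.2.2.2.2.1
lemma hexcl (h : ESB v v1 v2 p q) :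
    ∀ u : ℕ, ¬ (s(u,v1) ∈ q.g.edges ∧ s(u,v2) ∈ q.g.edges) := h.2.2.2.2.2.2.2.2.2.2.2

lemma hvq (h : ESB v v1 v2 p q) : v ∉ q.g.verts := by
  rw [h.hverts]
  simp only [Finset.mem_insert, Finset.mem_erase]
  rintro (rfl | rfl | ⟨hne, _⟩)
  · exact h.h1v h.hvp
  · exact h.h2v h.hvp
  · exact hne rfl

lemma anc_eq (h : ESB v v1 v2 p q) {u : ℕ} (hu1 : u ≠ v1) (hu2 : u ≠ v2) :
    q.anc u = p.anc u := by
  rw [h.hancq]; simp [hu1, hu2]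

lemma anc_v1 (h : ESB v v1 v2 p q) : q.anc v1 = p.anc v := by rw [h.hancq]; simp

lemma anc_v2 (h : ESB v v1 v2 p q) : q.anc v2 = p.anc v := by rw [h.hancq]; simp

lemma mem_qverts (h : ESB v v1 v2 p q) {x : ℕ} :
    x ∈ q.g.verts ↔ x = v1 ∨ x = v2 ∨ (x ∈ p.g.verts ∧ x ≠ v) := by
  rw [h.hverts]
  simp only [Finset.mem_insert, Finset.mem_erase]
  tauto

/-- Classification of the edges of the graph after a split. -/
lemma edge_back (h : ESB v v1 v2 p q) {x y : ℕ} (hq : s(x,y) ∈ q.g.edges) :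
    (s(x,y) ∈ p.g.edges ∧ x ≠ v ∧ y ≠ v ∧ x ≠ v1 ∧ x ≠ v2 ∧ y ≠ v1 ∧ y ≠ v2)
    ∨ ((x = v1 ∨ x = v2) ∧ s(y,v) ∈ p.g.edges ∧ y ≠ v ∧ y ≠ v1 ∧ y ≠ v2)
    ∨ ((y = v1 ∨ y = v2) ∧ s(x,v) ∈ p.g.edges ∧ x ≠ v ∧ x ≠ v1 ∧ x ≠ v2) := by
  have hxq : x ∈ q.g.verts := q.g.edges_mem _ hq x (by simp)
  have hyq : y ∈ q.g.verts := q.g.edges_mem _ hq y (by simp)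
  have hxv : x ≠ v := by rintro rfl; exact h.hvq hxq
  have hyv : y ≠ v := by rintro rfl; exact h.hvq hyq
  have h12' : ¬ (s(v1,v2) ∈ q.g.edges) := by
    intro hc
    have hne : s(v2,v) ∉ p.g.edges := fun hc' => h.h2v (p.g.edges_mem _ hc' v2 (by simp))
    rw [h.hsplit v2] at hne
    push_neg at hne
    exact hne.1 (by rwa [Sym2.eq_swap] at hc)
  have hdiag : x ≠ y := by
    intro hxy
    exact q.g.edges_nd _ hq (by rw [hxy]; simp)
  by_cases hx1 : x = v1
  · have hy1 : y ≠ v1 := fun hc => hdiag (by rw [hx1, hc])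
    have hy2 : y ≠ v2 := by
      intro hc
      exact h12' (by rwa [hx1, hc] at hq)
    refine Or.inr (Or.inl ⟨Or.inl hx1, ?_, hyv, hy1, hy2⟩)
    rw [h.hsplit y]
    refine Or.inl ?_
    rw [Sym2.eq_swap, ← hx1]
    exact hq
  by_cases hx2 : x = v2
  · have hy2 : y ≠ v2 := fun hc => hdiag (by rw [hx2, hc])
    have hy1 : y ≠ v1 := by
      intro hc
      apply h12'
      rw [Sym2.eq_swap] at hq
      rwa [hx2, hc] at hq
    refine Or.inr (Or.inl ⟨Or.inr hx2, ?_, hyv, hy1, hy2⟩)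
    rw [h.hsplit y]
    refine Or.inr ?_
    rw [Sym2.eq_swap, ← hx2]
    exact hq
  by_cases hy1 : y = v1
  · refine Or.inr (Or.inr ⟨Or.inl hy1, ?_, hxv, hx1, hx2⟩)
    rw [h.hsplit x]
    refine Or.inl ?_
    rwa [← hy1]
  by_cases hy2 : y = v2
  · refine Or.inr (Or.inr ⟨Or.inr hy2, ?_, hxv, hx1, hx2⟩)
    rw [h.hsplit x]
    refine Or.inr ?_
    rwa [← hy2]
  · exact Or.inl ⟨(h.hpin x y hxv hyv hx1 hx2 hy1 hy2).2 hq, hxv, hyv, hx1, hx2, hy1, hy2⟩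

lemma edge_fwd (h : ESB v v1 v2 p q) {x y : ℕ} (hp : s(x,y) ∈ p.g.edges)
    (hxv : x ≠ v) (hyv : y ≠ v) : s(x,y) ∈ q.g.edges := by
  have hxp : x ∈ p.g.verts := p.g.edges_mem _ hp x (by simp)
  have hyp : y ∈ p.g.verts := p.g.edges_mem _ hp y (by simp)
  refine (h.hpin x y hxv hyv ?_ ?_ ?_ ?_).1 hp
  all_goals rintro rfl
  · exact h.h1v hxp
  · exact h.h2v hxp
  · exact h.h1v hyp
  · exact h.h2v hyp

end ESB

/-- Performing one exclusive split of a centre `c` of a union-of-stars graph. -/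
lemma exclStep_star (V C U : Finset ℕ) (m : ℕ → ℕ) (anc : ℕ → ℕ)
    (c c1 c2 : ℕ) (m' : ℕ → ℕ)
    (hcC : c ∈ C) (hm : ∀ z ∈ V, m z ∈ C) (hdV : ∀ z ∈ V, z ∉ C)
    (hVU : ∀ x ∈ V, x ∈ U) (hCU : ∀ x ∈ C, x ∈ U)
    (hc1 : c1 ∉ U) (hc2 : c2 ∉ U) (h12 : c1 ≠ c2)
    (hm'1 : ∀ w ∈ V, m w = c → m' w = c1 ∨ m' w = c2)
    (hm'2 : ∀ w ∈ V, m w ≠ c → m' w = m w) :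
    ESB c c1 c2 ⟨starSG V C m, U, anc⟩
      ⟨starSG V (insert c1 (insert c2 (C.erase c))) m', insert c1 (insert c2 U),
        fun u => if u = c1 ∨ u = c2 then anc c else anc u⟩ := by
  set C' := insert c1 (insert c2 (C.erase c)) with hC'
  have hcV : c ∉ V := fun hcv => hdV c hcv hcC
  have hm' : ∀ z ∈ V, m' z ∈ C' := by
    intro z hz
    by_cases hmz : m z = c
    · rcases hm'1 z hz hmz with h | h <;> rw [h] <;> simp [hC']
    · rw [hm'2 z hz hmz, hC']
      simp only [Finset.mem_insert, Finset.mem_erase]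
      exact Or.inr (Or.inr ⟨hmz, hm z hz⟩)
  have hdV' : ∀ z ∈ V, z ∉ C' := by
    intro z hz
    simp only [hC', Finset.mem_insert, Finset.mem_erase]
    push_neg
    exact ⟨fun hc => hc1 (hc ▸ hVU z hz), fun hc => hc2 (hc ▸ hVU z hz),
      fun _ => hdV z hz⟩
  have hmemP := mem_starSG V C m hm hdV
  have hmemQ := mem_starSG V C' m' hm' hdV'
  -- characterizations of edges at c, c1, c2
  have hchP : ∀ u : ℕ, s(u,c) ∈ (starSG V C m).edges ↔ u ∈ V ∧ m u = c := by
    intro u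
    rw [hmemP]
    constructor
    · rintro ⟨z, hz, ⟨rfl, h2⟩ | ⟨h1, rfl⟩⟩
      · exact ⟨hz, h2.symm⟩
      · exact absurd hcC (hdV _ hz)
    · rintro ⟨hu, hmu⟩
      exact ⟨u, hu, Or.inl ⟨rfl, hmu.symm⟩⟩
  have hchQ : ∀ u d : ℕ, d ∉ U → (s(u,d) ∈ (starSG V C' m').edges ↔ u ∈ V ∧ m' u = d) := by
    intro u d hd
    rw [hmemQ]
    constructor
    · rintro ⟨z, hz, ⟨rfl, h2⟩ | ⟨h1, rfl⟩⟩
      · exact ⟨hz, h2.symm⟩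
      · exact absurd (hVU _ hz) hd
    · rintro ⟨hu, hmu⟩
      exact ⟨u, hu, Or.inl ⟨rfl, hmu.symm⟩⟩
  refine ⟨?_, hc1, hc2, ?_, ?_, h12, rfl, rfl, ?_, ?_, ?_, ?_⟩
  · exact Finset.mem_union_right _ hcC
  · intro hc; rcases Finset.mem_union.1 hc with h | h
    exacts [hc1 (hVU _ h), hc1 (hCU _ h)]
  · intro hc; rcases Finset.mem_union.1 hc with h | h
    exacts [hc2 (hVU _ h), hc2 (hCU _ h)]
  · -- verts
    show V ∪ C' = insert c1 (insert c2 ((V ∪ C).erase c))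
    ext x
    simp only [hC', Finset.mem_union, Finset.mem_insert, Finset.mem_erase]
    constructor
    · rintro (hx | hx | hx | ⟨hxc, hx⟩)
      · refine Or.inr (Or.inr ⟨fun hc => hcV (hc ▸ hx), Or.inl hx⟩)
      · exact Or.inl hx
      · exact Or.inr (Or.inl hx)
      · exact Or.inr (Or.inr ⟨hxc, Or.inr hx⟩)
    · rintro (hx | hx | ⟨hxc, hx | hx⟩)
      · exact Or.inr (Or.inl hx)
      · exact Or.inr (Or.inr (Or.inl hx))
      · exact Or.inl hx
      · exact Or.inr (Or.inr (Or.inr ⟨hxc, hx⟩))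
  · -- pinned edges
    intro u w huc hwc hu1 hu2 hw1 hw2
    rw [hmemP, hmemQ]
    constructor
    · rintro ⟨z, hz, ⟨h1, h2⟩ | ⟨h1, h2⟩⟩
      · exact ⟨z, hz, Or.inl ⟨h1, h2.trans (hm'2 z hz (fun hc => hwc (h2.trans hc))).symm⟩⟩
      · exact ⟨z, hz, Or.inr ⟨h1.trans (hm'2 z hz (fun hc => huc (h1.trans hc))).symm, h2⟩⟩
    · rintro ⟨z, hz, ⟨h1, h2⟩ | ⟨h1, h2⟩⟩
      · have hmz : m z ≠ c := by
          intro hc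
          rcases hm'1 z hz hc with hh | hh
          · exact hw1 (h2.trans hh)
          · exact hw2 (h2.trans hh)
        exact ⟨z, hz, Or.inl ⟨h1, h2.trans (hm'2 z hz hmz)⟩⟩
      · have hmz : m z ≠ c := by
          intro hc
          rcases hm'1 z hz hc with hh | hh
          · exact hu1 (h1.trans hh)
          · exact hu2 (h1.trans hh)
        exact ⟨z, hz, Or.inr ⟨h1.trans (hm'2 z hz hmz), h2⟩⟩
  · -- split edges
    intro u
    rw [hchP u, hchQ u c1 hc1, hchQ u c2 hc2]
    constructor
    · rintro ⟨hu, hmu⟩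
      rcases hm'1 u hu hmu with h | h
      · exact Or.inl ⟨hu, h⟩
      · exact Or.inr ⟨hu, h⟩
    · rintro (⟨hu, hmu⟩ | ⟨hu, hmu⟩) <;> refine ⟨hu, ?_⟩ <;> by_contra hc
      · exact hc1 (hmu ▸ hm'2 u hu hc ▸ hCU _ (hm u hu))
      · exact hc2 (hmu ▸ hm'2 u hu hc ▸ hCU _ (hm u hu))
  · -- exclusivity
    intro u ⟨hA, hB⟩
    rw [hchQ u c1 hc1] at hA
    rw [hchQ u c2 hc2] at hB
    exact h12 (hA.2 ▸ hB.2 ▸ rfl)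

/-- Invariants of any run of exclusive splits started from the star instance. -/
structure OInv (G : SG) (a : ℕ) (p : MCState) : Prop where
  o_vu : ∀ x ∈ p.g.verts, x ∈ p.used
  oG : ∀ x ∈ G.verts, x ∈ p.used
  o_anc : ∀ u ∈ G.verts, p.anc u = u
  o_edge : ∀ x y : ℕ, s(x,y) ∈ p.g.edges →
    (p.anc x = a ∧ p.anc y ≠ a) ∨ (p.anc x ≠ a ∧ p.anc y = a)
  o_deg : ∀ u x y : ℕ, p.anc u ≠ a → s(u,x) ∈ p.g.edges → s(u,y) ∈ p.g.edges → x = y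
  o_live : ∀ w ∈ G.verts, w ∈ p.g.verts → ∃ u, s(w,u) ∈ p.g.edges

lemma OInv.step {G : SG} {a : ℕ} {p q : MCState} {v v1 v2 : ℕ}
    (inv : OInv G a p) (h : ESB v v1 v2 p q) : OInv G a q := by
  constructor
  · intro x hx
    rw [h.mem_qverts] at hx
    rw [h.hused]
    simp only [Finset.mem_insert]
    rcases hx with rfl | rfl | ⟨hx, _⟩
    · exact Or.inl rfl
    · exact Or.inr (Or.inl rfl)
    · exact Or.inr (Or.inr (inv.o_vu x hx))
  · intro x hx
    rw [h.hused]
    simp only [Finset.mem_insert]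
    exact Or.inr (Or.inr (inv.oG x hx))
  · intro u hu
    rw [h.anc_eq (fun hc => h.h1u (hc ▸ inv.oG u hu)) (fun hc => h.h2u (hc ▸ inv.oG u hu))]
    exact inv.o_anc u hu
  · intro x y hq
    rcases h.edge_back hq with ⟨hp, hxv, hyv, hx1, hx2, hy1, hy2⟩ |
      ⟨hx12, hp, hyv, hy1, hy2⟩ | ⟨hy12, hp, hxv, hx1, hx2⟩
    · rw [h.anc_eq hx1 hx2, h.anc_eq hy1 hy2]
      exact inv.o_edge x y hp
    · have hax : q.anc x = p.anc v := by
        rcases hx12 with rfl | rfl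
        · exact h.anc_v1
        · exact h.anc_v2
      rw [hax, h.anc_eq hy1 hy2]
      rcases inv.o_edge y v hp with ⟨h1, h2⟩ | ⟨h1, h2⟩
      · exact Or.inr ⟨h2, h1⟩
      · exact Or.inl ⟨h2, h1⟩
    · have hay : q.anc y = p.anc v := by
        rcases hy12 with rfl | rfl
        · exact h.anc_v1
        · exact h.anc_v2
      rw [hay, h.anc_eq hx1 hx2]
      rcases inv.o_edge x v hp with ⟨h1, h2⟩ | ⟨h1, h2⟩
      · exact Or.inl ⟨h1, h2⟩
      · exact Or.inr ⟨h1, h2⟩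
  · intro u x y hu hx hy
    rcases h.edge_back hx with ⟨hpx, huv, hxv, hu1, hu2, hx1, hx2⟩ |
      ⟨hu12, hpx, hxv, hx1, hx2⟩ | ⟨hx12, hpx, huv, hu1, hu2⟩
    · -- u, x untouched
      rcases h.edge_back hy with ⟨hpy, _, hyv, _, _, hy1, hy2⟩ |
        ⟨hu12', hpy, hyv, hy1, hy2⟩ | ⟨hy12, hpy, _, _, _⟩
      · exact inv.o_deg u x y (by rwa [h.anc_eq hu1 hu2] at hu) hpx hpy
      · rcases hu12' with rfl | rfl
        · exact absurd rfl hu1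
        · exact absurd rfl hu2
      · exact absurd (inv.o_deg u x v (by rwa [h.anc_eq hu1 hu2] at hu) hpx
          hpy) hxv
    · -- u ∈ {v1, v2}
      have hau : q.anc u = p.anc v := by
        rcases hu12 with rfl | rfl
        · exact h.anc_v1
        · exact h.anc_v2
      have hav : p.anc v ≠ a := by rwa [hau] at hu
      rcases h.edge_back hy with ⟨hpy, huv', _, hu1, hu2, _, _⟩ |
        ⟨_, hpy, hyv, hy1, hy2⟩ | ⟨hy12, hpy, huv', hu1, hu2⟩
      · rcases hu12 with rfl | rfl
        · exact absurd rfl hu1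
        · exact absurd rfl hu2
      · refine inv.o_deg v x y hav ?_ ?_
        · rwa [Sym2.eq_swap]
        · rwa [Sym2.eq_swap]
      · rcases hu12 with rfl | rfl
        · exact absurd rfl hu1
        · exact absurd rfl hu2
    · -- x ∈ {v1, v2}
      rcases h.edge_back hy with ⟨hpy, _, hyv, hu1', hu2', hy1, hy2⟩ |
        ⟨hu12', hpy, _, _, _⟩ | ⟨hy12, hpy, _, _, _⟩
      · exact absurd (inv.o_deg u y v (by rwa [h.anc_eq hu1 hu2] at hu) hpy
          hpx).symm
          (by intro hc; exact hyv hc.symm)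
      · rcases hu12' with rfl | rfl
        · exact absurd rfl hu1
        · exact absurd rfl hu2
      · rcases hx12 with hx12 | hx12 <;> rcases hy12 with hy12 | hy12
        · exact hx12.trans hy12.symm
        · exact absurd ⟨hx12 ▸ hx, hy12 ▸ hy⟩ (h.hexcl u)
        · exact absurd ⟨hy12 ▸ hy, hx12 ▸ hx⟩ (h.hexcl u)
        · exact hx12.trans hy12.symm
  · intro w hw hwq
    rw [h.mem_qverts] at hwq
    rcases hwq with rfl | rfl | ⟨hwp, hwv⟩
    · exact absurd (inv.oG _ hw) h.h1u
    · exact absurd (inv.oG _ hw) h.h2u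
    · obtain ⟨u, hu⟩ := inv.o_live w hw hwp
      by_cases huv : u = v
      · rcases (h.hsplit w).1 (huv ▸ hu) with hq | hq
        · exact ⟨v1, hq⟩
        · exact ⟨v2, hq⟩
      · exact ⟨u, h.edge_fwd hu hwv huv⟩

/-- Configuration of the mirrored run: history `L`, current centres `C`,
assignment `m` of the original vertices to centres, used names `U`, ancestor map
`anc`, and the correspondence `psi` from centres of the original run to centres
of the mirrored run. -/
structure Cfg where
  L : List MCState
  C : Finset ℕ
  m : ℕ → ℕ
  U : Finset ℕ
  anc : ℕ → ℕ
  psi : ℕ → ℕ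

def MRel (a : ℕ) (p q : MCState) : Prop := ∃ v, ExclStepAt v p q ∧ p.anc v = a

/-- Coupling invariant between the original run (state `p`) and the mirrored run. -/
structure CInv (G : SG) (a : ℕ) (Hst : MCState) (i : ℕ) (p : MCState) (s : Cfg) : Prop where
  len : s.L.length ≤ i + 1
  ne : s.L ≠ []
  headL : s.L.head? = some Hst
  lastL : s.L.getLast? = some ⟨starSG G.verts s.C s.m, s.U, s.anc⟩
  chain : s.L.Chain' (MRel a)
  hmC : ∀ w ∈ G.verts, s.m w ∈ s.C
  hGU : ∀ x ∈ G.verts, x ∈ s.U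
  hCU : ∀ x ∈ s.C, x ∈ s.U
  hdisj : ∀ w ∈ G.verts, w ∉ s.C
  hanc : ∀ c ∈ s.C, s.anc c = a
  hpsiC : ∀ u ∈ p.g.verts, p.anc u = a → s.psi u ∈ s.C
  hpsiInj : ∀ u ∈ p.g.verts, ∀ u' ∈ p.g.verts,
    p.anc u = a → p.anc u' = a → s.psi u = s.psi u' → u = u'
  hsurv : ∀ w ∈ G.verts, w ∈ p.g.verts → ∀ u, s(w,u) ∈ p.g.edges → s.m w = s.psi u
  hdead : ∀ w ∈ G.verts, w ∉ p.g.verts → ∀ w' ∈ G.verts, w' ≠ w → s.m w' ≠ s.m w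
  hdeadpsi : ∀ w ∈ G.verts, w ∉ p.g.verts → ∀ u ∈ p.g.verts, p.anc u = a → s.psi u ≠ s.m w

lemma sup_add_notmem (U : Finset ℕ) (k : ℕ) (hk : 0 < k) : U.sup id + k ∉ U := by
  intro hmem
  have := Finset.le_sup (f := id) hmem
  simp only [id] at this
  omega

/-- Skip case: the original run splits a vertex which is neither an original
vertex nor a descendant of `a`. -/
lemma stepC_inv {G : SG} {a : ℕ} {Hst : MCState} {i : ℕ} {p q : MCState} {s : Cfg}
    {v v1 v2 : ℕ} (haG : a ∉ G.verts)
    (oinv : OInv G a p) (cinv : CInv G a Hst i p s) (h : ESB v v1 v2 p q)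
    (hva : p.anc v ≠ a) (hvG : v ∉ G.verts) : CInv G a Hst (i+1) q s := by
  -- survivors and dead originals don't change
  have hverts : ∀ w ∈ G.verts, (w ∈ q.g.verts ↔ w ∈ p.g.verts) := by
    intro w hw
    rw [h.mem_qverts]
    constructor
    · rintro (rfl | rfl | ⟨hwp, _⟩)
      · exact absurd (oinv.oG _ hw) h.h1u
      · exact absurd (oinv.oG _ hw) h.h2u
      · exact hwp
    · intro hwp
      exact Or.inr (Or.inr ⟨hwp, fun hc => hvG (hc ▸ hw)⟩)
  have hcent : ∀ u, u ∈ q.g.verts → q.anc u = a →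
      u ∈ p.g.verts ∧ p.anc u = a ∧ u ≠ v1 ∧ u ≠ v2 := by
    intro u huq hau
    rcases h.mem_qverts.1 huq with rfl | rfl | ⟨hup, huv⟩
    · rw [h.anc_v1] at hau; exact absurd hau hva
    · rw [h.anc_v2] at hau; exact absurd hau hva
    · have h1 : u ≠ v1 := fun hc => h.h1v (hc ▸ hup)
      have h2 : u ≠ v2 := fun hc => h.h2v (hc ▸ hup)
      rw [h.anc_eq h1 h2] at hau
      exact ⟨hup, hau, h1, h2⟩
  refine ⟨cinv.len.trans (by omega), cinv.ne, cinv.headL, cinv.lastL, cinv.chain,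
    cinv.hmC, cinv.hGU, cinv.hCU, cinv.hdisj, cinv.hanc, ?_, ?_, ?_, ?_, ?_⟩
  · intro u huq hau
    obtain ⟨hup, hau', _, _⟩ := hcent u huq hau
    exact cinv.hpsiC u hup hau'
  · intro u huq u' huq' hau hau' heq
    obtain ⟨hup, h1, _, _⟩ := hcent u huq hau
    obtain ⟨hup', h1', _, _⟩ := hcent u' huq' hau'
    exact cinv.hpsiInj u hup u' hup' h1 h1' heq
  · intro w hw hwq u hq
    have hwp : w ∈ p.g.verts := (hverts w hw).1 hwq
    have hwanc : p.anc w ≠ a := by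
      rw [oinv.o_anc w hw]
      exact fun hc => haG (hc ▸ hw)
    rcases h.edge_back hq with ⟨hp, _, _, _, _, _, _⟩ |
      ⟨hw12, _, _, _, _⟩ | ⟨hu12, hp, _, _, _⟩
    · exact cinv.hsurv w hw hwp u hp
    · rcases hw12 with rfl | rfl
      · exact absurd (oinv.oG _ hw) h.h1u
      · exact absurd (oinv.oG _ hw) h.h2u
    · rcases oinv.o_edge w v hp with ⟨h1, _⟩ | ⟨_, h2⟩
      · exact absurd h1 hwanc
      · exact absurd h2 hva
  · intro w hw hwq w' hw' hne
    exact cinv.hdead w hw (fun hc => hwq ((hverts w hw).2 hc)) w' hw' hne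
  · intro w hw hwq u huq hau
    obtain ⟨hup, hau', _, _⟩ := hcent u huq hau
    exact cinv.hdeadpsi w hw (fun hc => hwq ((hverts w hw).2 hc)) u hup hau'

/-- Mirror step when the original run splits a descendant of `a` into `w1, w2`. -/
def stepACfg (V : Finset ℕ) (s : Cfg) (v w1 w2 : ℕ) (q : MCState) : Cfg :=
  ⟨s.L ++ [⟨starSG V (insert (s.U.sup id + 1) (insert (s.U.sup id + 2) (s.C.erase (s.psi v))))
      (fun w => if s.m w = s.psi v then
        (if s(w, w1) ∈ q.g.edges then s.U.sup id + 1 else s.U.sup id + 2) else s.m w),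
      insert (s.U.sup id + 1) (insert (s.U.sup id + 2) s.U),
      fun u => if u = s.U.sup id + 1 ∨ u = s.U.sup id + 2 then s.anc (s.psi v) else s.anc u⟩],
    insert (s.U.sup id + 1) (insert (s.U.sup id + 2) (s.C.erase (s.psi v))),
    fun w => if s.m w = s.psi v then
      (if s(w, w1) ∈ q.g.edges then s.U.sup id + 1 else s.U.sup id + 2) else s.m w,
    insert (s.U.sup id + 1) (insert (s.U.sup id + 2) s.U),
    fun u => if u = s.U.sup id + 1 ∨ u = s.U.sup id + 2 then s.anc (s.psi v) else s.anc u,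
    fun x => if x = w1 then s.U.sup id + 1 else if x = w2 then s.U.sup id + 2 else s.psi x⟩

lemma stepA_inv {G : SG} {a : ℕ} {Hst : MCState} {i : ℕ} {p q : MCState} {s : Cfg}
    {v v1 v2 : ℕ} (haG : a ∉ G.verts)
    (oinv : OInv G a p) (cinv : CInv G a Hst i p s) (h : ESB v v1 v2 p q)
    (hva : p.anc v = a) : CInv G a Hst (i+1) q (stepACfg G.verts s v v1 v2 q) := by
  set c := s.psi v with hc
  set c1 := s.U.sup id + 1 with hc1
  set c2 := s.U.sup id + 2 with hc2
  set m' : ℕ → ℕ := fun w => if s.m w = c then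
      (if s(w, v1) ∈ q.g.edges then c1 else c2) else s.m w with hm'
  set psi' : ℕ → ℕ := fun x => if x = v1 then c1 else if x = v2 then c2 else s.psi x with hpsi'
  set anc' : ℕ → ℕ := fun u => if u = c1 ∨ u = c2 then s.anc c else s.anc u with hanc'
  set C' := insert c1 (insert c2 (s.C.erase c)) with hC'
  set U' := insert c1 (insert c2 s.U) with hU'
  have hc1U : c1 ∉ s.U := sup_add_notmem _ 1 (by omega)
  have hc2U : c2 ∉ s.U := sup_add_notmem _ 2 (by omega)
  have h12 : c1 ≠ c2 := by omega
  have hcC : c ∈ s.C := cinv.hpsiC v h.hvp hva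
  have hvnotG : v ∉ G.verts := by
    intro hvG
    apply haG
    have hov := oinv.o_anc v hvG
    rw [hov] at hva
    rwa [← hva]
  have hm'1 : ∀ w, s.m w = c → m' w = c1 ∨ m' w = c2 := by
    intro w hmw
    rw [hm']
    simp only [hmw, if_true]
    by_cases ht : s(w, v1) ∈ q.g.edges <;> simp [ht]
  have hm'2 : ∀ w, s.m w ≠ c → m' w = s.m w := by
    intro w hmw
    rw [hm']
    simp [hmw]
  have hnew : ESB c c1 c2 ⟨starSG G.verts s.C s.m, s.U, s.anc⟩
      ⟨starSG G.verts C' m', U', anc'⟩ :=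
    exclStep_star G.verts s.C s.U s.m s.anc c c1 c2 m' hcC cinv.hmC cinv.hdisj
      cinv.hGU cinv.hCU hc1U hc2U h12 (fun w _ => hm'1 w) (fun w _ => hm'2 w)
  have hverts : ∀ w ∈ G.verts, (w ∈ q.g.verts ↔ w ∈ p.g.verts) := by
    intro w hw
    rw [h.mem_qverts]
    constructor
    · rintro (rfl | rfl | ⟨hwp, _⟩)
      · exact absurd (oinv.oG _ hw) h.h1u
      · exact absurd (oinv.oG _ hw) h.h2u
      · exact hwp
    · intro hwp
      exact Or.inr (Or.inr ⟨hwp, fun hcw => hvnotG (hcw ▸ hw)⟩)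
  have hcentq : ∀ u ∈ q.g.verts, q.anc u = a →
      u = v1 ∨ u = v2 ∨ (u ∈ p.g.verts ∧ u ≠ v ∧ p.anc u = a ∧ u ≠ v1 ∧ u ≠ v2) := by
    intro u huq hau
    rcases h.mem_qverts.1 huq with rfl | rfl | ⟨hup, huv⟩
    · exact Or.inl rfl
    · exact Or.inr (Or.inl rfl)
    · have h1 : u ≠ v1 := fun hcq => h.h1v (hcq ▸ hup)
      have h2 : u ≠ v2 := fun hcq => h.h2v (hcq ▸ hup)
      rw [h.anc_eq h1 h2] at hau
      exact Or.inr (Or.inr ⟨hup, huv, hau, h1, h2⟩)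
  have hc1C : c1 ∉ s.C := fun hcm => hc1U (cinv.hCU _ hcm)
  have hc2C : c2 ∉ s.C := fun hcm => hc2U (cinv.hCU _ hcm)
  have hpsioldC : ∀ u, u ∈ p.g.verts → p.anc u = a → u ≠ v → s.psi u ∈ s.C.erase c := by
    intro u hup hau huv
    refine Finset.mem_erase.2 ⟨?_, cinv.hpsiC u hup hau⟩
    intro hceq
    exact huv (cinv.hpsiInj u hup v h.hvp hau hva hceq)
  -- the key description of psi' on the centres of q
  have key : ∀ w, w ∈ q.g.verts → q.anc w = a →
      (w = v1 ∧ psi' w = c1) ∨ (w = v2 ∧ psi' w = c2) ∨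
      (w ∈ p.g.verts ∧ w ≠ v ∧ p.anc w = a ∧ psi' w = s.psi w ∧ psi' w ∈ s.C.erase c) := by
    intro w hwq haw
    rcases hcentq w hwq haw with hw1 | hw2 | ⟨hwp, hwv, haw', hw1, hw2⟩
    · exact Or.inl ⟨hw1, by simp only [hpsi']; rw [if_pos hw1]⟩
    · refine Or.inr (Or.inl ⟨hw2, ?_⟩)
      have hne : w ≠ v1 := fun hcw => h.h12 (hcw.symm.trans hw2)
      simp only [hpsi']
      rw [if_neg hne, if_pos hw2]
    · have he : psi' w = s.psi w := by
        simp only [hpsi']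
        rw [if_neg hw1, if_neg hw2]
      exact Or.inr (Or.inr ⟨hwp, hwv, haw', he, he ▸ hpsioldC w hwp haw' hwv⟩)
  have hception : ∀ x ∈ s.C.erase c, x ≠ c1 ∧ x ≠ c2 := by
    intro x hx
    have hxC : x ∈ s.C := (Finset.mem_erase.1 hx).2
    exact ⟨fun hcw => hc1U (hcw ▸ cinv.hCU x hxC), fun hcw => hc2U (hcw ▸ cinv.hCU x hxC)⟩
  show CInv G a Hst (i+1) q ⟨s.L ++ [⟨starSG G.verts C' m', U', anc'⟩], C', m', U', anc', psi'⟩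
  constructor
  -- len
  · simp only [List.length_append, List.length_singleton]
    have hl := cinv.len
    omega
  -- ne
  · simp
  -- headL
  · show (s.L ++ [_]).head? = _
    rw [List.head?_append_of_ne_nil _ cinv.ne]
    exact cinv.headL
  -- lastL
  · show (s.L ++ [_]).getLast? = _
    rw [List.getLast?_concat]
  -- chain
  · show (s.L ++ [(⟨starSG G.verts C' m', U', anc'⟩ : MCState)]).Chain' (MRel a)
    refine List.IsChain.append cinv.chain (List.isChain_singleton _) ?_
    intro x hx y hy
    rw [cinv.lastL, Option.mem_some_iff] at hx
    simp only [List.head?_cons, Option.mem_some_iff] at hy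
    subst hx; subst hy
    exact ⟨c, ⟨c1, c2, hnew⟩, cinv.hanc c hcC⟩
  -- hmC
  · intro w hw
    show m' w ∈ C'
    by_cases hmw : s.m w = c
    · rcases hm'1 w hmw with hh | hh <;> rw [hh] <;> simp [hC']
    · rw [hm'2 w hmw, hC']
      simp only [Finset.mem_insert, Finset.mem_erase]
      exact Or.inr (Or.inr ⟨hmw, cinv.hmC w hw⟩)
  -- hGU
  · intro x hx
    show x ∈ U'
    simp only [hU', Finset.mem_insert]
    exact Or.inr (Or.inr (cinv.hGU x hx))
  -- hCU
  · intro x hx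
    have hx' : x ∈ C' := hx
    show x ∈ U'
    simp only [hC', Finset.mem_insert, Finset.mem_erase] at hx'
    simp only [hU', Finset.mem_insert]
    rcases hx' with rfl | rfl | ⟨_, hx'⟩
    · exact Or.inl rfl
    · exact Or.inr (Or.inl rfl)
    · exact Or.inr (Or.inr (cinv.hCU x hx'))
  -- hdisj
  · intro w hw
    show w ∉ C'
    simp only [hC', Finset.mem_insert, Finset.mem_erase]
    push_neg
    refine ⟨fun hcw => hc1U (hcw ▸ cinv.hGU w hw), fun hcw => hc2U (hcw ▸ cinv.hGU w hw),
      fun _ => cinv.hdisj w hw⟩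
  -- hanc
  · intro d hd
    have hd' : d ∈ C' := hd
    show anc' d = a
    simp only [hC', Finset.mem_insert, Finset.mem_erase] at hd'
    rw [hanc']
    rcases hd' with rfl | rfl | ⟨_, hd'⟩
    · simp only [true_or, if_true]
      exact cinv.hanc c hcC
    · simp only [or_true, if_true]
      exact cinv.hanc c hcC
    · have hd1 : d ≠ c1 := fun hcw => hc1U (hcw ▸ cinv.hCU d hd')
      have hd2 : d ≠ c2 := fun hcw => hc2U (hcw ▸ cinv.hCU d hd')
      simp only [hd1, hd2, or_self, if_false]
      exact cinv.hanc d hd'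
  -- hpsiC
  · intro u huq hau
    show psi' u ∈ C'
    rcases key u huq hau with ⟨_, e⟩ | ⟨_, e⟩ | ⟨_, _, _, _, e⟩
    · rw [e]; simp [hC']
    · rw [e]; simp [hC']
    · simp only [hC', Finset.mem_insert]
      exact Or.inr (Or.inr e)
  -- hpsiInj
  · intro u huq u' huq' hau hau' heq
    have heq' : psi' u = psi' u' := heq
    rcases key u huq hau with ⟨hu, e1⟩ | ⟨hu, e1⟩ | ⟨hup, huv, hau1, e1, e1'⟩ <;>
      rcases key u' huq' hau' with ⟨hu', e2⟩ | ⟨hu', e2⟩ | ⟨hup', huv', hau2, e2, e2'⟩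
    · exact hu.trans hu'.symm
    · exact absurd (e1.symm.trans (heq'.trans e2)) h12
    · exact absurd (heq'.symm.trans e1) (hception _ e2').1
    · exact absurd (e2.symm.trans (heq'.symm.trans e1)) h12
    · exact hu.trans hu'.symm
    · exact absurd (heq'.symm.trans e1) (hception _ e2').2
    · exact absurd (heq'.trans e2) (hception _ e1').1
    · exact absurd (heq'.trans e2) (hception _ e1').2
    · refine cinv.hpsiInj u hup u' hup' hau1 hau2 ?_
      rw [← e1, ← e2]
      exact heq'
  -- hsurv
  · intro w hw hwq u hq
    show m' w = psi' u
    have hwp : w ∈ p.g.verts := (hverts w hw).1 hwq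
    have hwv : w ≠ v := fun hcw => hvnotG (hcw ▸ hw)
    have hwanc : p.anc w ≠ a := by
      rw [oinv.o_anc w hw]
      exact fun hcw => haG (hcw ▸ hw)
    rcases h.edge_back hq with ⟨hp, _, huv, _, _, hu1, hu2⟩ |
      ⟨hw12, _, _, _, _⟩ | ⟨hu12, hp, _, _, _⟩
    · -- untouched edge
      have hmw : s.m w = s.psi u := cinv.hsurv w hw hwp u hp
      have huA : p.anc u = a := by
        rcases oinv.o_edge w u hp with ⟨hh1, _⟩ | ⟨_, hh2⟩
        · exact absurd hh1 hwanc
        · exact hh2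
      have hup : u ∈ p.g.verts := p.g.edges_mem _ hp u (by simp)
      have hmnec : s.m w ≠ c := by
        intro hcm
        exact huv (cinv.hpsiInj u hup v h.hvp huA hva (by rw [← hmw, hcm]))
      rw [hm'2 w hmnec, hpsi']
      simp only [if_neg hu1, if_neg hu2]
      exact hmw
    · rcases hw12 with rfl | rfl
      · exact absurd (oinv.oG _ hw) h.h1u
      · exact absurd (oinv.oG _ hw) h.h2u
    · -- w was attached to v
      have hmw : s.m w = c := cinv.hsurv w hw hwp v hp
      rcases hu12 with hu | hu
      · have ht : s(w, v1) ∈ q.g.edges := hu ▸ hq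
        rw [hm', hpsi', hu]
        simp [hmw, ht]
      · have ht : s(w, v1) ∉ q.g.edges := fun hcw => h.hexcl w ⟨hcw, hu ▸ hq⟩
        rw [hm', hpsi', hu]
        simp [hmw, ht, Ne.symm h.h12]
  -- hdead
  · intro w hw hwq w' hw' hne
    show m' w' ≠ m' w
    have hwp : w ∉ p.g.verts := fun hcw => hwq ((hverts w hw).2 hcw)
    have hmw : s.m w ≠ c := fun hcw => cinv.hdeadpsi w hw hwp v h.hvp hva hcw.symm
    rw [hm'2 w hmw]
    by_cases hmw' : s.m w' = c
    · rcases hm'1 w' hmw' with hh | hh <;> rw [hh]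
      · exact fun hcw => hc1U (by rw [hcw]; exact cinv.hCU _ (cinv.hmC w hw))
      · exact fun hcw => hc2U (by rw [hcw]; exact cinv.hCU _ (cinv.hmC w hw))
    · rw [hm'2 w' hmw']
      exact cinv.hdead w hw hwp w' hw' hne
  -- hdeadpsi
  · intro w hw hwq u huq hau
    show psi' u ≠ m' w
    have hwp : w ∉ p.g.verts := fun hcw => hwq ((hverts w hw).2 hcw)
    have hmw : s.m w ≠ c := fun hcw => cinv.hdeadpsi w hw hwp v h.hvp hva hcw.symm
    rw [hm'2 w hmw]
    rcases key u huq hau with ⟨_, e⟩ | ⟨_, e⟩ | ⟨hup, _, hau', e, _⟩ <;> rw [e]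
    · exact fun hcw => hc1U (by rw [hcw]; exact cinv.hCU _ (cinv.hmC w hw))
    · exact fun hcw => hc2U (by rw [hcw]; exact cinv.hCU _ (cinv.hmC w hw))
    · exact cinv.hdeadpsi w hw hwp u hup hau'

/-- Mirror step when the original run splits (discards) an original vertex `v`:
the mirrored run gives `v` a private centre. -/
def stepBCfg (V : Finset ℕ) (s : Cfg) (v : ℕ) : Cfg :=
  ⟨s.L ++ [⟨starSG V (insert (s.U.sup id + 1) (insert (s.U.sup id + 2) (s.C.erase (s.m v))))
      (fun w => if w = v then s.U.sup id + 1 else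
        if s.m w = s.m v then s.U.sup id + 2 else s.m w),
      insert (s.U.sup id + 1) (insert (s.U.sup id + 2) s.U),
      fun u => if u = s.U.sup id + 1 ∨ u = s.U.sup id + 2 then s.anc (s.m v) else s.anc u⟩],
    insert (s.U.sup id + 1) (insert (s.U.sup id + 2) (s.C.erase (s.m v))),
    fun w => if w = v then s.U.sup id + 1 else
      if s.m w = s.m v then s.U.sup id + 2 else s.m w,
    insert (s.U.sup id + 1) (insert (s.U.sup id + 2) s.U),
    fun u => if u = s.U.sup id + 1 ∨ u = s.U.sup id + 2 then s.anc (s.m v) else s.anc u,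
    fun x => if s.psi x = s.m v then s.U.sup id + 2 else s.psi x⟩

lemma stepB_inv {G : SG} {a : ℕ} {Hst : MCState} {i : ℕ} {p q : MCState} {s : Cfg}
    {v v1 v2 : ℕ} (haG : a ∉ G.verts)
    (oinv : OInv G a p) (cinv : CInv G a Hst i p s) (h : ESB v v1 v2 p q)
    (hvG : v ∈ G.verts) : CInv G a Hst (i+1) q (stepBCfg G.verts s v) := by
  set c := s.m v with hc
  set c1 := s.U.sup id + 1 with hc1
  set c2 := s.U.sup id + 2 with hc2
  set m' : ℕ → ℕ := fun w => if w = v then c1 else if s.m w = c then c2 else s.m w with hm'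
  set psi' : ℕ → ℕ := fun x => if s.psi x = c then c2 else s.psi x with hpsi'
  set anc' : ℕ → ℕ := fun u => if u = c1 ∨ u = c2 then s.anc c else s.anc u with hanc'
  set C' := insert c1 (insert c2 (s.C.erase c)) with hC'
  set U' := insert c1 (insert c2 s.U) with hU'
  have hc1U : c1 ∉ s.U := sup_add_notmem _ 1 (by omega)
  have hc2U : c2 ∉ s.U := sup_add_notmem _ 2 (by omega)
  have h12 : c1 ≠ c2 := by omega
  have hcC : c ∈ s.C := cinv.hmC v hvG
  have hva : p.anc v ≠ a := by
    rw [oinv.o_anc v hvG]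
    exact fun hcw => haG (hcw ▸ hvG)
  have hm'1 : ∀ w, s.m w = c → m' w = c1 ∨ m' w = c2 := by
    intro w hmw
    rw [hm']
    by_cases hwv : w = v
    · simp [hwv]
    · simp [hwv, hmw]
  have hm'2 : ∀ w, w ≠ v → s.m w ≠ c → m' w = s.m w := by
    intro w hwv hmw
    rw [hm']
    simp [hwv, hmw]
  have hm'2' : ∀ w, s.m w ≠ c → m' w = s.m w := by
    intro w hmw
    refine hm'2 w ?_ hmw
    rintro rfl
    exact hmw hc.symm
  have hnew : ESB c c1 c2 ⟨starSG G.verts s.C s.m, s.U, s.anc⟩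
      ⟨starSG G.verts C' m', U', anc'⟩ :=
    exclStep_star G.verts s.C s.U s.m s.anc c c1 c2 m' hcC cinv.hmC cinv.hdisj
      cinv.hGU cinv.hCU hc1U hc2U h12 (fun w _ => hm'1 w) (fun w _ => hm'2' w)
  have hc1C : c1 ∉ s.C := fun hcm => hc1U (cinv.hCU _ hcm)
  have hc2C : c2 ∉ s.C := fun hcm => hc2U (cinv.hCU _ hcm)
  -- centres of q are exactly the centres of p
  have hcentq : ∀ u ∈ q.g.verts, q.anc u = a →
      u ∈ p.g.verts ∧ p.anc u = a ∧ u ≠ v1 ∧ u ≠ v2 ∧ u ≠ v := by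
    intro u huq hau
    rcases h.mem_qverts.1 huq with rfl | rfl | ⟨hup, huv⟩
    · rw [h.anc_v1] at hau; exact absurd hau hva
    · rw [h.anc_v2] at hau; exact absurd hau hva
    · have h1 : u ≠ v1 := fun hcq => h.h1v (hcq ▸ hup)
      have h2 : u ≠ v2 := fun hcq => h.h2v (hcq ▸ hup)
      rw [h.anc_eq h1 h2] at hau
      exact ⟨hup, hau, h1, h2, huv⟩
  -- psi' on centres
  have key : ∀ u, u ∈ p.g.verts → p.anc u = a →
      (s.psi u = c ∧ psi' u = c2) ∨ (s.psi u ≠ c ∧ psi' u = s.psi u ∧ psi' u ∈ s.C.erase c) := by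
    intro u hup hau
    by_cases hpc : s.psi u = c
    · exact Or.inl ⟨hpc, by rw [hpsi']; simp [hpc]⟩
    · refine Or.inr ⟨hpc, by rw [hpsi']; simp [hpc], ?_⟩
      have : psi' u = s.psi u := by rw [hpsi']; simp [hpc]
      rw [this]
      exact Finset.mem_erase.2 ⟨hpc, cinv.hpsiC u hup hau⟩
  have hception : ∀ x ∈ s.C.erase c, x ≠ c1 ∧ x ≠ c2 := by
    intro x hx
    have hxC : x ∈ s.C := (Finset.mem_erase.1 hx).2
    exact ⟨fun hcw => hc1U (hcw ▸ cinv.hCU x hxC), fun hcw => hc2U (hcw ▸ cinv.hCU x hxC)⟩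
  -- dead vertices of q
  have hdeadq : ∀ w ∈ G.verts, w ∉ q.g.verts → w = v ∨ (w ∉ p.g.verts ∧ w ≠ v) := by
    intro w hw hwq
    by_cases hwv : w = v
    · exact Or.inl hwv
    · refine Or.inr ⟨fun hwp => hwq ?_, hwv⟩
      exact h.mem_qverts.2 (Or.inr (Or.inr ⟨hwp, hwv⟩))
  show CInv G a Hst (i+1) q ⟨s.L ++ [⟨starSG G.verts C' m', U', anc'⟩], C', m', U', anc', psi'⟩
  constructor
  · simp only [List.length_append, List.length_singleton]
    have hl := cinv.len
    omega
  · simp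
  · show (s.L ++ [_]).head? = _
    rw [List.head?_append_of_ne_nil _ cinv.ne]
    exact cinv.headL
  · show (s.L ++ [_]).getLast? = _
    rw [List.getLast?_concat]
  · show (s.L ++ [(⟨starSG G.verts C' m', U', anc'⟩ : MCState)]).Chain' (MRel a)
    refine List.IsChain.append cinv.chain (List.isChain_singleton _) ?_
    intro x hx y hy
    rw [cinv.lastL, Option.mem_some_iff] at hx
    simp only [List.head?_cons, Option.mem_some_iff] at hy
    subst hx; subst hy
    exact ⟨c, ⟨c1, c2, hnew⟩, cinv.hanc c hcC⟩
  · intro w hw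
    show m' w ∈ C'
    by_cases hmw : s.m w = c
    · rcases hm'1 w hmw with hh | hh <;> rw [hh] <;> simp [hC']
    · rw [hm'2' w hmw, hC']
      simp only [Finset.mem_insert, Finset.mem_erase]
      exact Or.inr (Or.inr ⟨hmw, cinv.hmC w hw⟩)
  · intro x hx
    show x ∈ U'
    simp only [hU', Finset.mem_insert]
    exact Or.inr (Or.inr (cinv.hGU x hx))
  · intro x hx
    have hx' : x ∈ C' := hx
    show x ∈ U'
    simp only [hC', Finset.mem_insert, Finset.mem_erase] at hx'
    simp only [hU', Finset.mem_insert]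
    rcases hx' with rfl | rfl | ⟨_, hx'⟩
    · exact Or.inl rfl
    · exact Or.inr (Or.inl rfl)
    · exact Or.inr (Or.inr (cinv.hCU x hx'))
  · intro w hw
    show w ∉ C'
    simp only [hC', Finset.mem_insert, Finset.mem_erase]
    push_neg
    refine ⟨fun hcw => hc1U (hcw ▸ cinv.hGU w hw), fun hcw => hc2U (hcw ▸ cinv.hGU w hw),
      fun _ => cinv.hdisj w hw⟩
  · intro d hd
    have hd' : d ∈ C' := hd
    show anc' d = a
    simp only [hC', Finset.mem_insert, Finset.mem_erase] at hd'
    rw [hanc']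
    rcases hd' with rfl | rfl | ⟨_, hd'⟩
    · simp only [true_or, if_true]
      exact cinv.hanc c hcC
    · simp only [or_true, if_true]
      exact cinv.hanc c hcC
    · have hd1 : d ≠ c1 := fun hcw => hc1U (hcw ▸ cinv.hCU d hd')
      have hd2 : d ≠ c2 := fun hcw => hc2U (hcw ▸ cinv.hCU d hd')
      simp only [hd1, hd2, or_self, if_false]
      exact cinv.hanc d hd'
  · intro u huq hau
    show psi' u ∈ C'
    obtain ⟨hup, hau', _, _, _⟩ := hcentq u huq hau
    rcases key u hup hau' with ⟨_, e⟩ | ⟨_, e, e'⟩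
    · rw [e]; simp [hC']
    · rw [e] at e' ⊢
      simp only [hC', Finset.mem_insert]
      exact Or.inr (Or.inr e')
  · intro u huq u' huq' hau hau' heq
    have heq' : psi' u = psi' u' := heq
    obtain ⟨hup, hau1, _, _, _⟩ := hcentq u huq hau
    obtain ⟨hup', hau2, _, _, _⟩ := hcentq u' huq' hau'
    rcases key u hup hau1 with ⟨e0, e1⟩ | ⟨_, e1, e1'⟩ <;>
      rcases key u' hup' hau2 with ⟨e0', e2⟩ | ⟨_, e2, e2'⟩
    · exact cinv.hpsiInj u hup u' hup' hau1 hau2 (e0.trans e0'.symm)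
    · exfalso
      apply hc2C
      rw [← (e2.symm.trans (heq'.symm.trans e1))]
      exact cinv.hpsiC u' hup' hau2
    · exfalso
      apply hc2C
      rw [← (e1.symm.trans (heq'.trans e2))]
      exact cinv.hpsiC u hup hau1
    · refine cinv.hpsiInj u hup u' hup' hau1 hau2 ?_
      rw [← e1, ← e2]
      exact heq'
  · intro w hw hwq u hq
    show m' w = psi' u
    have hwv : w ≠ v := by
      rintro rfl
      exact h.hvq hwq
    have hwp : w ∈ p.g.verts := by
      rcases h.mem_qverts.1 hwq with rfl | rfl | ⟨hwp, _⟩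
      · exact absurd (oinv.oG _ hw) h.h1u
      · exact absurd (oinv.oG _ hw) h.h2u
      · exact hwp
    have hwanc : p.anc w ≠ a := by
      rw [oinv.o_anc w hw]
      exact fun hcw => haG (hcw ▸ hw)
    rcases h.edge_back hq with ⟨hp, _, huv, _, _, hu1, hu2⟩ |
      ⟨hw12, _, _, _, _⟩ | ⟨hu12, hp, _, _, _⟩
    · have hmw : s.m w = s.psi u := cinv.hsurv w hw hwp u hp
      by_cases hpc : s.psi u = c
      · have hmc : s.m w = c := hmw.trans hpc
        rw [hm', hpsi']
        simp [hwv, hmc, hpc]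
      · have hmc : s.m w ≠ c := fun hcw => hpc (hmw.symm.trans hcw)
        rw [hm'2 w hwv hmc, hpsi']
        simp only [if_neg hpc]
        exact hmw
    · rcases hw12 with rfl | rfl
      · exact absurd (oinv.oG _ hw) h.h1u
      · exact absurd (oinv.oG _ hw) h.h2u
    · -- impossible: edge between two non-centres
      have hvanc : p.anc v ≠ a := hva
      rcases oinv.o_edge w v hp with ⟨hh1, _⟩ | ⟨_, hh2⟩
      · exact absurd hh1 hwanc
      · exact absurd hh2 hvanc
  · intro w hw hwq w' hw' hne
    show m' w' ≠ m' w
    rcases hdeadq w hw hwq with hwv | ⟨hwp, hwv⟩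
    · -- w = v : private centre c1
      have he : m' w = c1 := by simp only [hm']; rw [if_pos hwv]
      rw [he]
      have hne' : w' ≠ v := fun hcw => hne (hcw.trans hwv.symm)
      by_cases hmc : s.m w' = c
      · rw [hm']
        simp only [if_neg hne', if_pos hmc]
        exact Ne.symm h12
      · rw [hm'2 w' hne' hmc]
        exact fun hcw => hc1U (by rw [← hcw]; exact cinv.hCU _ (cinv.hmC w' hw'))
    · -- w was already dead
      have hmw : s.m w ≠ c := by
        intro hcw
        exact cinv.hdead w hw hwp v hvG (fun hcq => hwp (hcq ▸ h.hvp)) hcw.symm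
      rw [hm'2 w hwv hmw]
      by_cases hw'v : w' = v
      · have he' : m' w' = c1 := by simp only [hm']; rw [if_pos hw'v]
        rw [he']
        exact fun hcw => hc1U (by rw [hcw]; exact cinv.hCU _ (cinv.hmC w hw))
      · by_cases hmc : s.m w' = c
        · have he' : m' w' = c2 := by
            simp only [hm']
            rw [if_neg hw'v, if_pos hmc]
          rw [he']
          exact fun hcw => hc2U (by rw [hcw]; exact cinv.hCU _ (cinv.hmC w hw))
        · rw [hm'2 w' hw'v hmc]
          exact cinv.hdead w hw hwp w' hw' hne
  · intro w hw hwq u huq hau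
    show psi' u ≠ m' w
    obtain ⟨hup, hau', _, _, _⟩ := hcentq u huq hau
    have hpsival : psi' u = c2 ∨ (psi' u = s.psi u ∧ psi' u ∈ s.C.erase c) := by
      rcases key u hup hau' with ⟨_, e⟩ | ⟨_, e, e'⟩
      · exact Or.inl e
      · exact Or.inr ⟨e, e'⟩
    rcases hdeadq w hw hwq with hwv | ⟨hwp, hwv⟩
    · have he : m' w = c1 := by simp only [hm']; rw [if_pos hwv]
      rw [he]
      rcases hpsival with e | ⟨e, _⟩
      · rw [e]; exact h12.symm
      · rw [e]
        exact fun hcw => hc1U (by rw [← hcw]; exact cinv.hCU _ (cinv.hpsiC u hup hau'))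
    · have hmw : s.m w ≠ c := by
        intro hcw
        exact cinv.hdead w hw hwp v hvG (fun hcq => hwp (hcq ▸ h.hvp)) hcw.symm
      rw [hm'2 w hwv hmw]
      rcases hpsival with e | ⟨e, _⟩
      · rw [e]
        exact fun hcw => hc2U (by rw [hcw]; exact cinv.hCU _ (cinv.hmC w hw))
      · rw [e]
        exact cinv.hdeadpsi w hw hwp u hup hau'

lemma SG.ext' {s t : SG} (hv : s.verts = t.verts) (he : s.edges = t.edges) : s = t := by
  cases s; cases t
  dsimp at hv he
  subst hv; subst he
  rfl

lemma MCState.ext' {s t : MCState} (hg : s.g = t.g) (hu : s.used = t.used)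
    (ha : s.anc = t.anc) : s = t := by
  cases s; cases t
  dsimp at hg hu ha
  subst hg; subst hu; subst ha
  rfl

lemma list_getD_zero {α} {l : List α} {x : α} (d : α) (h : l.head? = some x) :
    l.getD 0 d = x := by
  cases l with
  | nil => simp at h
  | cons a l => simp at h; simp [h]

lemma list_getD_last {α} {l : List α} {x : α} (d : α) (h : l.getLast? = some x) :
    l.getD (l.length - 1) d = x := by
  have hne : l ≠ [] := by rintro rfl; simp at h
  rw [List.getLast?_eq_getLast_of_ne_nil hne, Option.some_inj] at h
  have hlt : l.length - 1 < l.length := Nat.sub_lt (List.length_pos_iff.2 hne) one_pos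
  rw [List.getD_eq_getElem _ _ hlt, ← List.getLast_eq_getElem]
  exact h

/-- A solution of the Multicut with Vertex Splitting instance `(H, S, t)` in which
every performed split is applied to a vertex satisfying the predicate `P` in the
current state: a sequence of at most `t` exclusive vertex splits after which every
terminal pair both of whose endpoints are unsplit lies in different connected
components. -/
def MCSolutionVia (H : SG) (S : Finset (Sym2 ℕ)) (t : ℕ) (P : MCState → ℕ → Prop) : Prop :=
  ∃ (n : ℕ) (f : ℕ → MCState), n ≤ t ∧ f 0 = ⟨H, H.verts, id⟩ ∧
    (∀ i < n, ∃ v : ℕ, ExclStepAt v (f i) (f (i+1)) ∧ P (f i) v) ∧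
    ∀ e ∈ S, ∀ x y : ℕ, e = s(x,y) →
      x ∈ (f n).g.verts → y ∈ (f n).g.verts → ¬ Reach (f n).g x y

/-- If the star instance admits a solution with at most `t` exclusive splits, it admits
one in which every split is applied to `a` or to a descendant of `a` (i.e., to a vertex
whose ancestor is `a`). -/
theorem stmt5 (G : SG) (a : ℕ) (ha : a ∉ G.verts)
    (H : SG) (hv : H.verts = insert a G.verts)
    (he : ∀ e : Sym2 ℕ, e ∈ H.edges ↔ ∃ v ∈ G.verts, e = s(a, v))
    (t : ℕ)
    (h : MCSolutionVia H G.edges t fun _ _ => True) :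
    MCSolutionVia H G.edges t fun p v => p.anc v = a := by
  classical
  obtain ⟨n, f, hn, h0, hstep, hsep⟩ := h
  set Hst : MCState := ⟨H, H.verts, id⟩ with hHst
  -- chosen split data
  have hstep' : ∀ i, i < n → ∃ v v1 v2, ESB v v1 v2 (f i) (f (i+1)) := by
    intro i hi
    obtain ⟨v, hsv, -⟩ := hstep i hi
    obtain ⟨v1, v2, hb⟩ := hsv
    exact ⟨v, v1, v2, hb⟩
  choose vD v1D v2D hB using hstep'
  -- initial configuration
  set s0 : Cfg := ⟨[Hst], {a}, fun _ => a, H.verts, id, id⟩ with hs0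
  -- initial graph is the star graph
  have hstar : starSG G.verts {a} (fun _ => a) = H := by
    refine SG.ext' ?_ ?_
    · show G.verts ∪ {a} = H.verts
      rw [hv, Finset.insert_eq, Finset.union_comm]
    · ext e
      induction e using Sym2.ind with
      | _ x y =>
        rw [mem_starSG G.verts {a} (fun _ => a) (fun _ _ => Finset.mem_singleton_self a)
          (fun z hz => by simp only [Finset.mem_singleton]; exact fun hc => ha (hc ▸ hz)),
          he]
        constructor
        · rintro ⟨z, hz, ⟨h1, h2⟩ | ⟨h1, h2⟩⟩
          · exact ⟨z, hz, by rw [h1, h2]; exact Sym2.eq_swap⟩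
          · exact ⟨z, hz, by rw [h1, h2]⟩
        · rintro ⟨z, hz, hzeq⟩
          rw [Sym2.eq_iff] at hzeq
          rcases hzeq with ⟨rfl, rfl⟩ | ⟨rfl, rfl⟩
          · exact ⟨y, hz, Or.inr ⟨rfl, rfl⟩⟩
          · exact ⟨x, hz, Or.inl ⟨rfl, rfl⟩⟩
  have hstate0 : Hst = (⟨starSG G.verts {a} (fun _ => a), H.verts, id⟩ : MCState) :=
    MCState.ext' (by rw [hstar]) rfl rfl
  -- the mirrored run
  obtain ⟨sim, hsim0, hsimS⟩ : ∃ simf : ℕ → Cfg, simf 0 = s0 ∧ ∀ i, simf (i+1) =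
      (if hi : i < n then
        (if (f i).anc (vD i hi) = a then
          stepACfg G.verts (simf i) (vD i hi) (v1D i hi) (v2D i hi) (f (i+1))
        else if (vD i hi) ∈ G.verts then stepBCfg G.verts (simf i) (vD i hi)
        else simf i)
      else simf i) :=
    ⟨fun k => Nat.rec s0 (fun i ih =>
      (if hi : i < n then
        (if (f i).anc (vD i hi) = a then
          stepACfg G.verts ih (vD i hi) (v1D i hi) (v2D i hi) (f (i+1))
        else if (vD i hi) ∈ G.verts then stepBCfg G.verts ih (vD i hi)
        else ih)
      else ih)) k, rfl, fun i => rfl⟩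
  -- main induction
  have main : ∀ i, i ≤ n → OInv G a (f i) ∧ CInv G a Hst i (f i) (sim i) := by
    intro i
    induction i with
    | zero =>
      intro _
      rw [h0, hsim0]
      constructor
      · -- initial OInv
        refine ⟨?_, ?_, ?_, ?_, ?_, ?_⟩
        · intro x hx; exact hx
        · intro x hx
          show x ∈ H.verts
          rw [hv]; exact Finset.mem_insert_of_mem hx
        · intro u _; rfl
        · intro x y hxy
          rw [he] at hxy
          obtain ⟨z, hz, hzeq⟩ := hxy
          rw [Sym2.eq_iff] at hzeq
          rcases hzeq with ⟨rfl, rfl⟩ | ⟨rfl, rfl⟩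
          · exact Or.inl ⟨rfl, fun hc => ha (hc ▸ hz)⟩
          · exact Or.inr ⟨fun hc => ha (hc ▸ hz), rfl⟩
        · intro u x y hu hx hy
          rw [he] at hx hy
          obtain ⟨z, hz, hzeq⟩ := hx
          obtain ⟨z', hz', hzeq'⟩ := hy
          rw [Sym2.eq_iff] at hzeq hzeq'
          rcases hzeq with ⟨h1, h2⟩ | ⟨h1, h2⟩
          · exact absurd h1 hu
          · rcases hzeq' with ⟨h1', h2'⟩ | ⟨h1', h2'⟩
            · exact absurd h1' hu
            · exact h2.trans h2'.symm
        · intro w hw _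
          refine ⟨a, ?_⟩
          rw [he]
          exact ⟨w, hw, Sym2.eq_swap⟩
      · -- initial CInv
        refine ⟨?_, ?_, ?_, ?_, ?_, ?_, ?_, ?_, ?_, ?_, ?_, ?_, ?_, ?_, ?_⟩
        · simp [hs0]
        · simp [hs0]
        · simp [hs0]
        · show [Hst].getLast? = some _
          rw [List.getLast?_singleton, hstate0]
        · exact List.isChain_singleton _
        · intro w _; exact Finset.mem_singleton_self a
        · intro x hx
          show x ∈ H.verts
          rw [hv]; exact Finset.mem_insert_of_mem hx
        · intro x hx
          show x ∈ H.verts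
          rw [Finset.mem_singleton.1 hx, hv]
          exact Finset.mem_insert_self a _
        · intro w hw
          simp only [hs0, Finset.mem_singleton]
          exact fun hc => ha (hc ▸ hw)
        · intro c hc
          exact Finset.mem_singleton.1 hc
        · intro u _ hau
          show (u : ℕ) ∈ ({a} : Finset ℕ)
          simp only [Finset.mem_singleton]
          exact hau
        · intro u _ u' _ _ _ heq
          exact heq
        · intro w hw _ u hq
          show a = u
          rw [he] at hq
          obtain ⟨z, hz, hzeq⟩ := hq
          rw [Sym2.eq_iff] at hzeq
          rcases hzeq with ⟨h1, _⟩ | ⟨_, h2⟩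
          · exact absurd h1.symm (fun hc => ha (hc ▸ hw))
          · exact h2.symm
        · intro w hw hwv
          exfalso
          apply hwv
          show w ∈ H.verts
          rw [hv]
          exact Finset.mem_insert_of_mem hw
        · intro w hw hwv
          exfalso
          apply hwv
          show w ∈ H.verts
          rw [hv]
          exact Finset.mem_insert_of_mem hw
    | succ i ih =>
      intro hsucc
      have hi : i < n := hsucc
      obtain ⟨o, ci⟩ := ih (Nat.le_of_lt hi)
      have hb := hB i hi
      refine ⟨o.step hb, ?_⟩
      rw [hsimS i, dif_pos hi]
      by_cases hA : (f i).anc (vD i hi) = a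
      · rw [if_pos hA]
        exact stepA_inv ha o ci hb hA
      · rw [if_neg hA]
        by_cases hBB : (vD i hi) ∈ G.verts
        · rw [if_pos hBB]
          exact stepB_inv ha o ci hb hBB
        · rw [if_neg hBB]
          exact stepC_inv ha o ci hb hA hBB
  obtain ⟨oN, cN⟩ := main n le_rfl
  set sN := sim n with hsN
  -- the new run
  refine ⟨sN.L.length - 1, fun k => sN.L.getD k Hst, ?_, ?_, ?_, ?_⟩
  · have hl := cN.len
    omega
  · exact list_getD_zero Hst cN.headL
  · -- the steps
    intro k hk
    have hchain := List.isChain_iff_getElem.1 cN.chain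
    have hrel := hchain k (by omega)
    have hk1 : k < sN.L.length := by omega
    have hk2 : k + 1 < sN.L.length := by omega
    obtain ⟨w, hw1, hw2⟩ := hrel
    refine ⟨w, ?_, ?_⟩
    · show ExclStepAt w (sN.L.getD k Hst) (sN.L.getD (k+1) Hst)
      rw [List.getD_eq_getElem _ _ hk1, List.getD_eq_getElem _ _ hk2]
      exact hw1
    · show (sN.L.getD k Hst).anc w = a
      rw [List.getD_eq_getElem _ _ hk1]
      exact hw2
  · -- separation
    intro e hmem x y hexy hx0 hy0
    have hlast : sN.L.getD (sN.L.length - 1) Hst =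
        ⟨starSG G.verts sN.C sN.m, sN.U, sN.anc⟩ := list_getD_last Hst cN.lastL
    have hx : x ∈ (starSG G.verts sN.C sN.m).verts := by
      have hx' : x ∈ (sN.L.getD (sN.L.length - 1) Hst).g.verts := hx0
      rwa [hlast] at hx'
    have hy : y ∈ (starSG G.verts sN.C sN.m).verts := by
      have hy' : y ∈ (sN.L.getD (sN.L.length - 1) Hst).g.verts := hy0
      rwa [hlast] at hy'
    show ¬ Reach (sN.L.getD (sN.L.length - 1) Hst).g x y
    rw [hlast]
    have hxG : x ∈ G.verts := G.edges_mem e hmem x (by rw [hexy]; simp)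
    have hyG : y ∈ G.verts := G.edges_mem e hmem y (by rw [hexy]; simp)
    have hxy : x ≠ y := by
      intro hc
      exact G.edges_nd e hmem (by rw [hexy, hc]; simp)
    have hne : sN.m x ≠ sN.m y := by
      by_cases hxin : x ∈ (f n).g.verts
      · by_cases hyin : y ∈ (f n).g.verts
        · -- both survive: use the separation of the original run
          have hre : ¬ Reach (f n).g x y := hsep e hmem x y hexy hxin hyin
          obtain ⟨ux, hux⟩ := oN.o_live x hxG hxin
          obtain ⟨uy, huy⟩ := oN.o_live y hyG hyin
          have hxanc : (f n).anc x ≠ a := by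
            rw [oN.o_anc x hxG]
            exact fun hc => ha (hc ▸ hxG)
          have hyanc : (f n).anc y ≠ a := by
            rw [oN.o_anc y hyG]
            exact fun hc => ha (hc ▸ hyG)
          have huxa : (f n).anc ux = a := by
            rcases oN.o_edge x ux hux with ⟨h1, _⟩ | ⟨_, h2⟩
            · exact absurd h1 hxanc
            · exact h2
          have huya : (f n).anc uy = a := by
            rcases oN.o_edge y uy huy with ⟨h1, _⟩ | ⟨_, h2⟩
            · exact absurd h1 hyanc
            · exact h2
          have huxv : ux ∈ (f n).g.verts := (f n).g.edges_mem _ hux ux (by simp)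
          have huyv : uy ∈ (f n).g.verts := (f n).g.edges_mem _ huy uy (by simp)
          have hneu : ux ≠ uy := by
            rintro rfl
            apply hre
            refine Relation.ReflTransGen.tail (Relation.ReflTransGen.single hux) ?_
            rw [Sym2.eq_swap]
            exact huy
          intro hc
          apply hneu
          refine cN.hpsiInj ux huxv uy huyv huxa huya ?_
          rw [← cN.hsurv x hxG hxin ux hux, ← cN.hsurv y hyG hyin uy huy]
          exact hc
        · exact cN.hdead y hyG hyin x hxG hxy
      · intro hc
        exact cN.hdead x hxG hxin y hyG (Ne.symm hxy) hc.symm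
    exact not_reach_starSG G.verts sN.C sN.m cN.hmC cN.hdisj x y hxG hyG hne
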